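/- Let O be an integral domain, f a monic polynomial over O, and k, m positive integers with k | m. Let z₀ be an element of an algebraic closure Ω of Frac(O) with f^{∘k}(z₀) = z₀, and set λ := (f^{∘k})'(z₀). Write m̃ := Π_{p prime, p | k} p^{v_p(m)} (the k-part of m) and m' := m / m̃ (the prime-to-k part of m), where v_p denotes the p-adic valuation. Then k divides m̃, and in Ω the following identity holds: Π_{e | m', μ(m'/e) = 1} ((f^{∘ m̃ e})'(z₀) − 1) = Φ_{m'}(λ^{m̃/k}) · Π_{e | m', μ(m'/e) = −1} ((f^{∘ m̃ e})'(z₀) − 1), where (f^{∘ m̃ e})'(z₀) = λ^{m̃ e / k} and Φ_{m'} is the m'-th cyclotomic polynomial. -/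

import Mathlib

open Polynomial

/-- The resultant of two polynomials `f` and `g`, defined as the determinant of their
Sylvester matrix (rows of coefficients of `f` repeated `g.natDegree` times, followed by
rows of coefficients of `g` repeated `f.natDegree` times). -/
noncomputable def resultant {R : Type*} [CommRing R] (f g : Polynomial R) : R :=
  Matrix.det (Matrix.of fun i j : Fin (g.natDegree + f.natDegree) =>
    if (i : ℕ) < g.natDegree then
      (if (i : ℕ) ≤ (j : ℕ) ∧ (j : ℕ) ≤ (i : ℕ) + f.natDegree then
        f.coeff (f.natDegree + (i : ℕ) - (j : ℕ)) else 0)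
    else
      (if (i : ℕ) - g.natDegree ≤ (j : ℕ) ∧ (j : ℕ) ≤ ((i : ℕ) - g.natDegree) + g.natDegree then
        g.coeff (g.natDegree + ((i : ℕ) - g.natDegree) - (j : ℕ)) else 0))

/-- The `n`-fold compositional iterate of a polynomial: `polyIter f 0 = X`,
`polyIter f (n+1) = (polyIter f n).comp f`. -/
noncomputable def polyIter {R : Type*} [CommSemiring R] (f : Polynomial R) : ℕ → Polynomial R
  | 0 => X
  | n + 1 => (polyIter f n).comp f

/-- The `k`-part of `m`: `m̃ = ∏_{p prime, p ∣ k} p^{v_p(m)}`. -/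
def kPart (k m : ℕ) : ℕ := ∏ p ∈ k.primeFactors, p ^ (m.factorization p)

section Aux
open Finset ArithmeticFunction
open scoped ArithmeticFunction.Moebius

lemma polyIter_add {R : Type*} [CommSemiring R] (f : Polynomial R) (a b : ℕ) :
    polyIter f (a + b) = (polyIter f a).comp (polyIter f b) := by
  induction b with
  | zero => simp [polyIter]
  | succ b ih => rw [← Nat.add_assoc]; simp [polyIter, ih, comp_assoc]

lemma eval_polyIter_fixed {K : Type*} [CommSemiring K] (g : Polynomial K) (k : ℕ) (z : K)
    (h : (polyIter g k).eval z = z) (t : ℕ) : (polyIter g (k * t)).eval z = z := by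
  induction t with
  | zero => simp [polyIter]
  | succ t ih => rw [Nat.mul_succ, polyIter_add, eval_comp, h, ih]

lemma deriv_polyIter_fixed {K : Type*} [CommRing K] (g : Polynomial K) (k : ℕ) (z : K)
    (h : (polyIter g k).eval z = z) (t : ℕ) :
    (derivative (polyIter g (k * t))).eval z = ((derivative (polyIter g k)).eval z) ^ t := by
  induction t with
  | zero => simp [polyIter]
  | succ t ih =>
    rw [Nat.mul_succ, polyIter_add, derivative_comp, eval_mul, eval_comp, h, ih, pow_succ]
    ring

lemma cyclo_prod_poly (K : Type*) [Field K] {n : ℕ} (hn : 0 < n) :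
    cyclotomic n K * ∏ e ∈ n.divisors.filter (fun e => μ (n / e) = -1), (X ^ e - 1) =
      ∏ e ∈ n.divisors.filter (fun e => μ (n / e) = 1), (X ^ e - 1) := by
  apply IsFractionRing.injective K[X] (RatFunc K)
  set φ := algebraMap K[X] (RatFunc K) with hφ
  have hne : ∀ e ∈ n.divisors, φ (X ^ e - 1) ≠ 0 := by
    intro e he
    rw [Nat.mem_divisors] at he
    have : (X ^ e - 1 : K[X]) ≠ 0 :=
      (monic_X_pow_sub_C (1 : K) (Nat.pos_of_dvd_of_pos he.1 hn).ne').ne_zero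
    rw [Ne, hφ, IsFractionRing.to_map_eq_zero_iff]
    exact this
  have h1 : φ (cyclotomic n K) = ∏ e ∈ n.divisors, φ (X ^ e - 1) ^ μ (n / e) := by
    rw [cyclotomic_eq_prod_X_pow_sub_one_pow_moebius K]
    exact Nat.prod_divisorsAntidiagonal' (fun a b => φ (X ^ b - 1) ^ μ a)
  have htri : ∀ t : ℕ, μ t = 1 ∨ μ t = -1 ∨ μ t = 0 := by
    intro t
    by_cases h : Squarefree t
    · rcases Nat.even_or_odd (ArithmeticFunction.cardFactors t) with he | ho
      · left; rw [ArithmeticFunction.moebius_apply_of_squarefree h, he.neg_one_pow]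
      · right; left; rw [ArithmeticFunction.moebius_apply_of_squarefree h, ho.neg_one_pow]
    · right; right; exact ArithmeticFunction.moebius_eq_zero_of_not_squarefree h
  have h2 : ∏ e ∈ n.divisors, φ (X ^ e - 1) ^ μ (n / e) =
      (∏ e ∈ n.divisors.filter (fun e => μ (n / e) = 1), φ (X ^ e - 1)) *
      (∏ e ∈ n.divisors.filter (fun e => μ (n / e) = -1), φ (X ^ e - 1))⁻¹ := by
    rw [← Finset.prod_filter_mul_prod_filter_not n.divisors (fun e => μ (n / e) = 1)]
    congr 1
    · exact Finset.prod_congr rfl fun e he => by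
        rw [(Finset.mem_filter.mp he).2, zpow_one]
    · rw [← Finset.prod_filter_mul_prod_filter_not
        (n.divisors.filter (fun e => ¬ μ (n / e) = 1)) (fun e => μ (n / e) = -1),
        Finset.filter_filter]
      have hz : ∏ e ∈ (n.divisors.filter (fun e => ¬ μ (n / e) = 1)).filter
          (fun e => ¬ μ (n / e) = -1), φ (X ^ e - 1) ^ μ (n / e) = 1 := by
        apply Finset.prod_eq_one
        intro e he
        simp only [Finset.mem_filter] at he
        rcases htri (n / e) with h | h | h
        · exact absurd h he.1.2
        · exact absurd h he.2
        · rw [h, zpow_zero]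
      rw [hz, mul_one, ← Finset.prod_inv_distrib]
      apply Finset.prod_congr
      · ext e
        simp only [Finset.mem_filter]
        constructor
        · rintro ⟨a, -, c⟩; exact ⟨a, c⟩
        · rintro ⟨a, c⟩; exact ⟨a, by omega, c⟩
      · intro e he
        rw [(Finset.mem_filter.mp he).2, zpow_neg_one]
  rw [map_mul, map_prod, h1, h2, inv_mul_cancel_right₀, map_prod]
  exact Finset.prod_ne_zero_iff.mpr fun e he => hne e (Finset.mem_filter.mp he).1

lemma cyclo_prod_eval {K : Type*} [Field K] (n : ℕ) (x : K) :
    ∏ e ∈ n.divisors.filter (fun e => μ (n / e) = 1), (x ^ e - 1) =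
      (cyclotomic n K).eval x *
        ∏ e ∈ n.divisors.filter (fun e => μ (n / e) = -1), (x ^ e - 1) := by
  rcases Nat.eq_zero_or_pos n with rfl | hn
  · simp
  have := congrArg (Polynomial.eval x) (cyclo_prod_poly K hn)
  simpa [eval_prod] using this.symm

end Aux

theorem dynatomic_modular_curve_equality
    (O : Type*) [CommRing O] [IsDomain O] (f : Polynomial O) (hf : f.Monic)
    (k m : ℕ) (hk : 0 < k) (hm : 0 < m) (hkm : k ∣ m)
    (z₀ : AlgebraicClosure (FractionRing O))
    -- z₀ is a periodic point of f of period k: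
    (hz : (polyIter (f.map (algebraMap O (AlgebraicClosure (FractionRing O)))) k).eval z₀
      = z₀) :
    -- k divides the k-part m̃ of m:
    k ∣ kPart k m ∧
    -- (f^{∘ m̃ e})'(z₀) = λ^{m̃ e / k}, where λ = (f^{∘k})'(z₀):
    (∀ e : ℕ, e ∣ m / kPart k m →
      (derivative (polyIter (f.map (algebraMap O (AlgebraicClosure (FractionRing O))))
          (kPart k m * e))).eval z₀
        = ((derivative (polyIter (f.map (algebraMap O (AlgebraicClosure (FractionRing O))))
            k)).eval z₀) ^ (kPart k m * e / k)) ∧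
    -- ∏_{e ∣ m', μ(m'/e)=1} ((f^{∘ m̃ e})'(z₀) − 1)
    --   = Φ_{m'}(λ^{m̃/k}) · ∏_{e ∣ m', μ(m'/e)=−1} ((f^{∘ m̃ e})'(z₀) − 1),
    -- where m' = m/m̃ is the prime-to-k part of m:
    ∏ e ∈ (m / kPart k m).divisors.filter
        (fun e => ArithmeticFunction.moebius ((m / kPart k m) / e) = 1),
        ((derivative (polyIter (f.map (algebraMap O (AlgebraicClosure (FractionRing O))))
            (kPart k m * e))).eval z₀ - 1)
      = (cyclotomic (m / kPart k m) (AlgebraicClosure (FractionRing O))).eval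
          ((((derivative (polyIter (f.map (algebraMap O (AlgebraicClosure (FractionRing O))))
              k)).eval z₀)) ^ (kPart k m / k)) *
        ∏ e ∈ (m / kPart k m).divisors.filter
            (fun e => ArithmeticFunction.moebius ((m / kPart k m) / e) = -1),
          ((derivative (polyIter (f.map (algebraMap O (AlgebraicClosure (FractionRing O))))
              (kPart k m * e))).eval z₀ - 1) := by
  set g := f.map (algebraMap O (AlgebraicClosure (FractionRing O))) with hg
  have hkfac : k.factorization ≤ m.factorization :=
    (Nat.factorization_le_iff_dvd hk.ne' hm.ne').mpr hkm
  have hk1 : k ∣ kPart k m := by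
    conv_lhs => rw [← Nat.factorization_prod_pow_eq_self hk.ne']
    rw [Finsupp.prod, Nat.support_factorization]
    exact Finset.prod_dvd_prod_of_dvd _ _ fun p _ => pow_dvd_pow p (hkfac p)
  obtain ⟨c, hc⟩ := hk1
  have hck : kPart k m / k = c := by rw [hc, Nat.mul_div_cancel_left _ hk]
  have hfac : ∀ e : ℕ,
      (Polynomial.derivative (polyIter g (kPart k m * e))).eval z₀ =
        (((Polynomial.derivative (polyIter g k)).eval z₀) ^ c) ^ e := by
    intro e
    rw [hc, mul_assoc, deriv_polyIter_fixed g k z₀ hz, pow_mul]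
  refine ⟨⟨c, hc⟩, fun e _ => ?_, ?_⟩
  · rw [hfac e, hc, mul_assoc, Nat.mul_div_cancel_left _ hk, pow_mul]
  · have e1 : (∏ e ∈ (m / kPart k m).divisors.filter
          (fun e => ArithmeticFunction.moebius ((m / kPart k m) / e) = 1),
          ((Polynomial.derivative (polyIter g (kPart k m * e))).eval z₀ - 1)) =
        ∏ e ∈ (m / kPart k m).divisors.filter
          (fun e => ArithmeticFunction.moebius ((m / kPart k m) / e) = 1),
          ((((Polynomial.derivative (polyIter g k)).eval z₀) ^ c) ^ e - 1) :=
      Finset.prod_congr rfl fun e _ => by rw [hfac e]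
    have e2 : (∏ e ∈ (m / kPart k m).divisors.filter
          (fun e => ArithmeticFunction.moebius ((m / kPart k m) / e) = -1),
          ((Polynomial.derivative (polyIter g (kPart k m * e))).eval z₀ - 1)) =
        ∏ e ∈ (m / kPart k m).divisors.filter
          (fun e => ArithmeticFunction.moebius ((m / kPart k m) / e) = -1),
          ((((Polynomial.derivative (polyIter g k)).eval z₀) ^ c) ^ e - 1) :=
      Finset.prod_congr rfl fun e _ => by rw [hfac e]
    rw [hck, e1, e2]
    exact cyclo_prod_eval _ _
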